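/- For every 0 ≤ i ≤ n−4 one has κ²·∂_i y = y·subst Q (θH̃_i) in A⟦t⟧. (This is the formal version, with the normalizing constant κ² made explicit, of the paper's Lemma: ∂_{i,T}F(ρ,Q) = F(ρ,Q)·H̃_i′(ρ,Q), where ∂_{i,T}F is the composition of ∂y/∂ρ_i with T.) -/

import Mathlib

noncomputable section

open PowerSeries

/-- The ring of accessory parameters: polynomials in `ρ_0, …, ρ_{n-4}` over `ℂ`. -/
abbrev AccRing (n : ℕ) : Type := MvPolynomial (Fin (n - 3)) ℂ

/-- Coefficientwise partial derivative of a power series with respect to the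
accessory parameter `ρ_i`. -/
noncomputable def pd {n : ℕ} (i : Fin (n - 3)) (u : PowerSeries (AccRing n)) :
    PowerSeries (AccRing n) :=
  PowerSeries.mk fun m => MvPolynomial.pderiv i (PowerSeries.coeff (R := AccRing n) m u)

/-- The polynomial `P = t·∏_{j=1}^{n-2}(t - α_j)`, viewed in `A⟦t⟧`. -/
noncomputable def Ppoly (n : ℕ) (α : Fin (n - 2) → ℂ) : PowerSeries (AccRing n) :=
  X * ∏ j, (X - C (R := AccRing n) (MvPolynomial.C (α j)))

/-- The polynomial `P̂ = P/t = ∏_{j=1}^{n-2}(t - α_j)`, viewed in `A⟦t⟧`. -/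
noncomputable def PhatPoly (n : ℕ) (α : Fin (n - 2) → ℂ) : PowerSeries (AccRing n) :=
  ∏ j, (X - C (R := AccRing n) (MvPolynomial.C (α j)))

/-- `κ = P̂(0) = (-1)^(n-2) ∏ α_j`. -/
noncomputable def kappa (n : ℕ) (α : Fin (n - 2) → ℂ) : ℂ :=
  (-1) ^ (n - 2) * ∏ j, α j

/-- `P1 = (1 - n/2)²·t^(n-3) - ∑_{i=0}^{n-4} ρ_i·t^i`, viewed in `A⟦t⟧`. -/
noncomputable def P1poly (n : ℕ) : PowerSeries (AccRing n) :=
  C (R := AccRing n) (MvPolynomial.C ((1 - (n : ℂ) / 2) ^ 2)) * X ^ (n - 3)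
    - ∑ i : Fin (n - 3), C (R := AccRing n) (MvPolynomial.X i) * X ^ (i : ℕ)

/-- The differential operator `L u = (P·u')' + P1·u`. -/
noncomputable def Lop (n : ℕ) (α : Fin (n - 2) → ℂ) (u : PowerSeries (AccRing n)) :
    PowerSeries (AccRing n) :=
  derivative (AccRing n) (Ppoly n α * derivative (AccRing n) u) + P1poly n * u

/-- Formal antiderivative with zero constant term. -/
noncomputable def integ {A : Type*} [CommRing A] [Algebra ℚ A] (u : PowerSeries A) :
    PowerSeries A :=
  PowerSeries.mk fun m => if m = 0 then 0 else ((m : ℚ)⁻¹) • PowerSeries.coeff (R := A) (m - 1) u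

/-- Formal substitution of the power series `S` (with zero constant term) into `G`. -/
noncomputable def substS {A : Type*} [CommSemiring A] (S G : PowerSeries A) : PowerSeries A :=
  PowerSeries.mk fun m =>
    ∑ j ∈ Finset.range (m + 1), PowerSeries.coeff (R := A) j G * PowerSeries.coeff (R := A) m (S ^ j)

/-- The operator `θ G = X·dG/dX`. -/
noncomputable def theta {A : Type*} [CommRing A] (G : PowerSeries A) : PowerSeries A :=
  PowerSeries.X * PowerSeries.derivative A G

/-- The formal Eichler integral: divide the `m`-th coefficient by `m³`. -/
noncomputable def eich {A : Type*} [CommRing A] [Algebra ℚ A] (H : PowerSeries A) :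
    PowerSeries A :=
  PowerSeries.mk fun m => (((m : ℚ) ^ 3)⁻¹) • PowerSeries.coeff (R := A) m H

/-- Formal exponential of a power series with zero constant term. -/
noncomputable def expS {A : Type*} [CommRing A] [Algebra ℚ A] (S : PowerSeries A) :
    PowerSeries A :=
  substS S (PowerSeries.exp A)

namespace SubstAux

variable {A : Type*} [CommRing A] {S : PowerSeries A} (hS : constantCoeff (R := A) S = 0)

theorem coeff_substS (G : PowerSeries A) (m : ℕ) :
    coeff (R := A) m (substS S G) = ∑ j ∈ Finset.range (m + 1), coeff (R := A) j G * coeff (R := A) m (S ^ j) := by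
  simp [substS]

include hS

theorem coeff_pow_eq_zero {j m : ℕ} (h : m < j) : coeff (R := A) m (S ^ j) = 0 := by
  obtain ⟨u, hu⟩ : (X : PowerSeries A) ∣ S := X_dvd_iff.mpr hS
  rw [hu, mul_pow, coeff_X_pow_mul', if_neg (by omega)]

omit hS

theorem substS_congr {G G' : PowerSeries A} {m : ℕ}
    (h : ∀ j ≤ m, coeff (R := A) j G = coeff (R := A) j G') :
    coeff (R := A) m (substS S G) = coeff (R := A) m (substS S G') := by
  rw [coeff_substS, coeff_substS]
  exact Finset.sum_congr rfl fun j hj => by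
    rw [h j (Nat.lt_succ_iff.mp (Finset.mem_range.mp hj))]

theorem substS_add (G G' : PowerSeries A) :
    substS S (G + G') = substS S G + substS S G' := by
  ext m
  simp [substS, add_mul, Finset.sum_add_distrib]

include hS

theorem substS_monomial (k : ℕ) (a : A) :
    substS S (monomial (R := A) k a) = C (R := A) a * S ^ k := by
  ext m
  rw [coeff_substS, coeff_C_mul]
  by_cases hk : k ≤ m
  · rw [Finset.sum_eq_single k (fun j _ hj => by rw [coeff_monomial, if_neg hj, zero_mul])
      (fun h => absurd (Finset.mem_range.mpr (Nat.lt_succ_of_le hk)) h), coeff_monomial, if_pos rfl]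
  · rw [Finset.sum_eq_zero, coeff_pow_eq_zero hS (by omega), mul_zero]
    intro j hj
    rw [coeff_monomial, if_neg (by simp at hj; omega), zero_mul]

theorem substS_coe (p : Polynomial A) :
    substS S (p : PowerSeries A) = p.eval₂ (C (R := A)) S := by
  induction p using Polynomial.induction_on' with
  | add p q hp hq => rw [Polynomial.coe_add, substS_add, hp, hq, Polynomial.eval₂_add]
  | monomial k a =>
      rw [Polynomial.coe_monomial, substS_monomial hS, Polynomial.eval₂_monomial]

theorem substS_trunc (G : PowerSeries A) (m N : ℕ) (h : m < N) :
    coeff (R := A) m (substS S G) = coeff (R := A) m (substS S ((trunc N G : Polynomial A) : PowerSeries A)) := by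
  apply substS_congr
  intro j hj
  rw [Polynomial.coeff_coe, coeff_trunc, if_pos (by omega)]

theorem substS_mul (G G' : PowerSeries A) :
    substS S (G * G') = substS S G * substS S G' := by
  ext m
  set p := trunc (m + 1) G with hp
  set q := trunc (m + 1) G' with hq
  have hcp : ∀ j ≤ m, coeff (R := A) j ((p : PowerSeries A)) = coeff (R := A) j G := fun j hj => by
    rw [hp, Polynomial.coeff_coe, coeff_trunc, if_pos (by omega)]
  have hcq : ∀ j ≤ m, coeff (R := A) j ((q : PowerSeries A)) = coeff (R := A) j G' := fun j hj => by
    rw [hq, Polynomial.coeff_coe, coeff_trunc, if_pos (by omega)]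
  have h1 : coeff (R := A) m (substS S (G * G')) =
      coeff (R := A) m (substS S ((p * q : Polynomial A) : PowerSeries A)) := by
    apply substS_congr
    intro j hj
    rw [Polynomial.coe_mul, coeff_mul, coeff_mul]
    refine Finset.sum_congr rfl fun ab hab => ?_
    have h := Finset.HasAntidiagonal.mem_antidiagonal.mp hab
    rw [hcp ab.1 (by omega), hcq ab.2 (by omega)]
  rw [h1, substS_coe hS (p * q), Polynomial.eval₂_mul, ← substS_coe hS p, ← substS_coe hS q]
  rw [coeff_mul, coeff_mul]
  refine Finset.sum_congr rfl fun ab hab => ?_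
  have h := Finset.HasAntidiagonal.mem_antidiagonal.mp hab
  congr 1
  · exact substS_congr fun j hj => hcp j (by omega)
  · exact substS_congr fun j hj => hcq j (by omega)

theorem substS_one : substS S (1 : PowerSeries A) = 1 := by
  have := substS_coe hS (1 : Polynomial A)
  simpa using this

theorem substS_C (a : A) : substS S (C (R := A) a) = C (R := A) a := by
  have := substS_coe hS (Polynomial.C a)
  simpa [Polynomial.coe_C] using this

theorem substS_X : substS S (X : PowerSeries A) = S := by
  have := substS_coe hS (Polynomial.X : Polynomial A)
  simpa [Polynomial.coe_X] using this

omit hS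

theorem constantCoeff_substS (G : PowerSeries A) :
    constantCoeff (R := A) (substS S G) = constantCoeff (R := A) G := by
  rw [← coeff_zero_eq_constantCoeff_apply, coeff_substS, ← coeff_zero_eq_constantCoeff_apply]
  simp

include hS

theorem derivative_pow' (k : ℕ) :
    derivative A (S ^ k) = k * S ^ (k - 1) * derivative A S := by
  cases k with
  | zero => simp
  | succ k =>
    induction k with
    | zero => simp
    | succ k ih =>
      rw [pow_succ, Derivation.leibniz, smul_eq_mul, smul_eq_mul, ih]
      push_cast
      ring_nf

theorem substS_deriv_poly (p : Polynomial A) :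
    derivative A (substS S (p : PowerSeries A))
      = substS S (derivative A (p : PowerSeries A)) * derivative A S := by
  induction p using Polynomial.induction_on' with
  | add p q hp hq => rw [Polynomial.coe_add, substS_add, map_add, map_add, substS_add, hp, hq, add_mul]
  | monomial k a =>
    rw [Polynomial.coe_monomial, substS_monomial hS,
      show ((monomial (R := A) k) a : PowerSeries A) = ((Polynomial.monomial k a : Polynomial A) : PowerSeries A)
        from (Polynomial.coe_monomial k a).symm,
      derivative_coe, Polynomial.derivative_monomial, Polynomial.coe_monomial, substS_monomial hS,
      Derivation.leibniz, smul_eq_mul, smul_eq_mul,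
      derivative_C, mul_zero, add_zero, derivative_pow' hS, map_mul, map_natCast]
    ring



theorem substS_deriv (G : PowerSeries A) :
    derivative A (substS S G) = substS S (derivative A G) * derivative A S := by
  ext m
  set p := trunc (m + 2) G with hp
  have hcp : ∀ j, j ≤ m + 1 → coeff (R := A) j G = coeff (R := A) j ((p : Polynomial A) : PowerSeries A) :=
    fun j hj => by rw [hp, Polynomial.coeff_coe, coeff_trunc, if_pos (by omega)]
  have hL : coeff (R := A) m (derivative A (substS S G))
      = coeff (R := A) m (derivative A (substS S ((p : Polynomial A) : PowerSeries A))) := by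
    rw [coeff_derivative, coeff_derivative]
    congr 1
    exact substS_congr fun j hj => hcp j (by omega)
  have hR : coeff (R := A) m (substS S (derivative A G) * derivative A S)
      = coeff (R := A) m (substS S (derivative A ((p : Polynomial A) : PowerSeries A)) * derivative A S) := by
    rw [coeff_mul, coeff_mul]
    refine Finset.sum_congr rfl fun ab hab => ?_
    have h := Finset.HasAntidiagonal.mem_antidiagonal.mp hab
    congr 1
    refine substS_congr fun j hj => ?_
    rw [coeff_derivative, coeff_derivative, hcp (j + 1) (by omega)]
  rw [hL, hR, substS_deriv_poly hS p]

omit hS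

theorem derivative_exp' [Algebra ℚ A] : derivative A (exp A) = exp A := by
  ext m
  rw [coeff_derivative, coeff_exp, coeff_exp]
  have : ((m : A) + 1) = algebraMap ℚ A ((m : ℚ) + 1) := by push_cast; simp
  push_cast
  rw [this, ← map_mul]
  congr 1
  rw [Nat.factorial_succ]
  push_cast
  have h1 : (m.factorial : ℚ) ≠ 0 := Nat.cast_ne_zero.mpr (Nat.factorial_ne_zero m)
  field_simp

end SubstAux

open SubstAux

section ThetaEich
variable {A : Type*} [CommRing A]

theorem coeff_theta (u : PowerSeries A) (m : ℕ) :
    coeff (R := A) m (theta u) = coeff (R := A) m u * (m : A) := by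
  cases m with
  | zero => simp [theta]
  | succ m => rw [theta, coeff_succ_X_mul, coeff_derivative]; push_cast; ring

theorem constantCoeff_theta (u : PowerSeries A) : constantCoeff (R := A) (theta u) = 0 := by
  rw [← coeff_zero_eq_constantCoeff_apply, coeff_theta]; simp

theorem theta_cube_eich [Algebra ℚ A] (H : PowerSeries A) (hH0 : constantCoeff (R := A) H = 0) :
    theta (theta (theta (eich H))) = H := by
  ext m
  rw [coeff_theta, coeff_theta, coeff_theta, eich, coeff_mk]
  cases m with
  | zero =>
    simp only [Nat.cast_zero, mul_zero]
    rw [coeff_zero_eq_constantCoeff_apply, hH0]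
  | succ m =>
    have hq : (((m+1:ℕ):ℚ)) ≠ 0 := by positivity
    have hP : ((m+1:ℕ):A) * (((m+1:ℕ):A) * ((m+1:ℕ):A)) = algebraMap ℚ A (((m+1:ℕ):ℚ)^3) := by
      rw [map_pow, map_natCast]; ring
    rw [mul_assoc, mul_assoc, hP, mul_comm, ← Algebra.smul_def, smul_smul,
      mul_inv_cancel₀ (pow_ne_zero 3 hq), one_smul]

end ThetaEich

section PD
variable {n : ℕ} (i : Fin (n - 3))

theorem coeff_pd (u : PowerSeries (AccRing n)) (m : ℕ) :
    coeff (R := AccRing n) m (pd i u) = MvPolynomial.pderiv i (coeff (R := AccRing n) m u) := by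
  simp [pd]

theorem pd_add (u v : PowerSeries (AccRing n)) : pd i (u + v) = pd i u + pd i v := by
  ext m; simp [coeff_pd]

theorem pd_mul (u v : PowerSeries (AccRing n)) :
    pd i (u * v) = pd i u * v + u * pd i v := by
  ext m
  simp only [coeff_pd, map_add, coeff_mul, map_sum, MvPolynomial.pderiv_mul,
    Finset.sum_add_distrib]

theorem pd_deriv (u : PowerSeries (AccRing n)) :
    pd i (derivative (AccRing n) u) = derivative (AccRing n) (pd i u) := by
  ext m : 1
  rw [coeff_pd, coeff_derivative, coeff_derivative, coeff_pd]
  have : ((m : AccRing n) + 1) = MvPolynomial.C (((m : ℕ) + 1 : ℕ) : ℂ) := by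
    push_cast
    simp [map_add, map_one, map_natCast]
  rw [this, MvPolynomial.pderiv_mul, MvPolynomial.pderiv_C, mul_zero, add_zero]

theorem pd_ofC (v : PowerSeries ℂ) :
    pd i (PowerSeries.map (MvPolynomial.C : ℂ →+* AccRing n) v) = 0 := by
  ext m
  simp [coeff_pd, coeff_map, MvPolynomial.pderiv_C]

theorem pd_Ppoly (α : Fin (n - 2) → ℂ) : pd i (Ppoly n α) = 0 := by
  have : Ppoly n α = PowerSeries.map (MvPolynomial.C : ℂ →+* AccRing n)
      (X * ∏ j, (X - C (R := ℂ) (α j))) := by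
    simp only [Ppoly, map_mul, PowerSeries.map_X, map_prod, map_sub, PowerSeries.map_C]
  rw [this, pd_ofC]

theorem pd_PhatPoly (α : Fin (n - 2) → ℂ) : pd i (PhatPoly n α) = 0 := by
  have : PhatPoly n α = PowerSeries.map (MvPolynomial.C : ℂ →+* AccRing n)
      (∏ j, (X - C (R := ℂ) (α j))) := by
    simp only [PhatPoly, map_prod, map_sub, PowerSeries.map_X, PowerSeries.map_C]
  rw [this, pd_ofC]

theorem pd_P1poly : pd i (P1poly n) = -(X ^ (i : ℕ)) := by
  classical
  ext m : 1
  rw [coeff_pd]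
  simp only [P1poly, map_sub, map_sum, coeff_C_mul, coeff_X_pow, map_neg]
  have h1 : MvPolynomial.pderiv i ((MvPolynomial.C ((1 - (n:ℂ)/2)^2) : AccRing n)
      * if m = n - 3 then 1 else 0) = 0 := by
    split <;> simp [MvPolynomial.pderiv_C]
  rw [h1, zero_sub, neg_inj]
  rw [Finset.sum_eq_single i]
  · split
    · simp [MvPolynomial.pderiv_X_self, *]
    · simp [*]
  · intro k _ hk
    split
    · simp [MvPolynomial.pderiv_X, hk, Pi.single_apply]
    · simp
  · intro h; exact absurd (Finset.mem_univ i) h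
end PD

section MainLemmas
variable {n : ℕ} (α : Fin (n - 2) → ℂ)

theorem kappa_ne (hα0 : ∀ j, α j ≠ 0) : kappa n α ≠ 0 :=
  mul_ne_zero (pow_ne_zero _ (neg_ne_zero.mpr one_ne_zero))
    (Finset.prod_ne_zero_iff.mpr fun j _ => hα0 j)

theorem constantCoeff_PhatPoly :
    constantCoeff (R := AccRing n) (PhatPoly n α) = MvPolynomial.C (kappa n α) := by
  rw [PhatPoly, map_prod, kappa]
  simp only [map_sub, constantCoeff_X, PowerSeries.constantCoeff_C, zero_sub, map_mul,
    map_pow, map_prod, map_neg, map_one]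
  rw [show (∏ j, -(MvPolynomial.C (α j) : AccRing n))
      = ∏ j, (-1 : AccRing n) * MvPolynomial.C (α j) by simp [neg_one_mul]]
  rw [Finset.prod_mul_distrib, Finset.prod_const, Finset.card_univ, Fintype.card_fin]

theorem constantCoeff_Ppoly : constantCoeff (R := AccRing n) (Ppoly n α) = 0 := by
  rw [Ppoly, map_mul, constantCoeff_X, zero_mul]

theorem coeff_one_Ppoly :
    coeff (R := AccRing n) 1 (Ppoly n α) = MvPolynomial.C (kappa n α) := by
  rw [Ppoly, show (1 : ℕ) = 0 + 1 from rfl, coeff_succ_X_mul,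
    coeff_zero_eq_constantCoeff_apply, ← PhatPoly, constantCoeff_PhatPoly]

theorem eq_C_of_deriv_zero (w : PowerSeries (AccRing n))
    (hw : derivative (AccRing n) w = 0) :
    w = C (R := AccRing n) (constantCoeff (R := AccRing n) w) := by
  ext m : 1
  cases m with
  | zero => rw [coeff_zero_eq_constantCoeff_apply, coeff_zero_eq_constantCoeff_apply,
      constantCoeff_C]
  | succ m =>
    have h := congrArg (coeff (R := AccRing n) m) hw
    rw [coeff_derivative, map_zero] at h
    have hm : ((m : AccRing n) + 1) ≠ 0 := by
      have : ((m : AccRing n) + 1) = (((m + 1 : ℕ)) : AccRing n) := by push_cast; ring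
      rw [this]
      exact Nat.cast_ne_zero.mpr (Nat.succ_ne_zero m)
    rw [coeff_C, if_neg (Nat.succ_ne_zero m)]
    exact (mul_eq_zero.mp h).resolve_right hm

theorem L_unique (hκ : kappa n α ≠ 0) (w : PowerSeries (AccRing n))
    (hw : Lop n α w = 0) (h0 : constantCoeff (R := AccRing n) w = 0) : w = 0 := by
  have key : ∀ m, coeff (R := AccRing n) m w = 0 := by
    intro m
    induction m using Nat.strong_induction_on with
    | _ m ih =>
      match m with
      | 0 => rw [coeff_zero_eq_constantCoeff_apply]; exact h0
      | Nat.succ m =>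
        rw [Lop] at hw
        have hc := congrArg (coeff (R := AccRing n) m) hw
        rw [map_add, map_zero, coeff_derivative] at hc
        have h2 : coeff (R := AccRing n) m (P1poly n * w) = 0 := by
          rw [coeff_mul]
          refine Finset.sum_eq_zero fun ab hab => ?_
          have h := Finset.HasAntidiagonal.mem_antidiagonal.mp hab
          rw [ih ab.2 (by omega), mul_zero]
        have h3 : coeff (R := AccRing n) (m + 1) (Ppoly n α * derivative (AccRing n) w)
            = MvPolynomial.C (kappa n α) * (coeff (R := AccRing n) (m + 1) w * ((m : AccRing n) + 1)) := by
          rw [coeff_mul]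
          rw [Finset.sum_eq_single (1, m)]
          · rw [coeff_one_Ppoly, coeff_derivative]
          · intro ab hab hne
            have h := Finset.HasAntidiagonal.mem_antidiagonal.mp hab
            rcases Nat.lt_or_ge ab.2 m with h' | h'
            · rw [coeff_derivative, ih (ab.2 + 1) (by omega), zero_mul, mul_zero]
            · have hab1 : ab.1 = 0 := by
                rcases Nat.eq_or_lt_of_le h' with h'' | h''
                · exact absurd (Prod.ext (by omega) h''.symm) hne
                · omega
              rw [hab1, coeff_zero_eq_constantCoeff_apply, constantCoeff_Ppoly, zero_mul]
          · intro h
            exact absurd (Finset.HasAntidiagonal.mem_antidiagonal.mpr (by omega)) h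
        rw [h3, h2, add_zero] at hc
        have hm : ((m : AccRing n) + 1) ≠ 0 := by
          have : ((m : AccRing n) + 1) = (((m + 1 : ℕ)) : AccRing n) := by push_cast; ring
          rw [this]
          exact Nat.cast_ne_zero.mpr (Nat.succ_ne_zero m)
        have hCκ : (MvPolynomial.C (kappa n α) : AccRing n) ≠ 0 := by
          simpa using hκ
        rcases mul_eq_zero.mp hc with h | h
        · rcases mul_eq_zero.mp h with h' | h'
          · exact absurd h' hCκ
          · exact (mul_eq_zero.mp h').resolve_right hm
        · exact absurd h hm
  ext m : 1
  rw [key m, map_zero]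

end MainLemmas


set_option maxHeartbeats 2000000 in
/-- `κ²·∂_i y = y·((θH̃_i) ∘ Q)`. -/
theorem stmt8 (n : ℕ) (hn : 4 ≤ n) (α : Fin (n - 2) → ℂ)
    (hα0 : ∀ j, α j ≠ 0) (hαinj : Function.Injective α)
    (y b yinv Q : PowerSeries (AccRing n))
    (hy1 : constantCoeff (R := AccRing n) y = 1) (hy : Lop n α y = 0)
    (hb0 : constantCoeff (R := AccRing n) b = 0)
    (hb : Lop n α b + 2 * PhatPoly n α * derivative (AccRing n) y
        + derivative (AccRing n) (PhatPoly n α) * y = 0)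
    (hyinv : y * yinv = 1)
    (hQ : Q = X * expS (b * yinv))
    (i : Fin (n - 3)) (H : PowerSeries (AccRing n))
    (hH0 : constantCoeff (R := AccRing n) H = 0)
    (hH : substS Q H = Ppoly n α * X ^ (i : ℕ) * y ^ 4) :
    C (R := AccRing n) (MvPolynomial.C (kappa n α)) ^ 2 * pd i y
      = y * substS Q (theta (eich H)) := by
  classical
  have hκ : kappa n α ≠ 0 := kappa_ne α hα0
  have hyL := hy
  rw [Lop] at hyL
  have hy' : derivative (AccRing n) (Ppoly n α) * derivative (AccRing n) y
      + Ppoly n α * derivative (AccRing n) (derivative (AccRing n) y) + P1poly n * y = 0 := by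
    rw [Derivation.leibniz, smul_eq_mul, smul_eq_mul] at hyL
    linear_combination hyL
  have hbL := hb
  rw [Lop] at hbL
  have hb' : derivative (AccRing n) (Ppoly n α) * derivative (AccRing n) b
      + Ppoly n α * derivative (AccRing n) (derivative (AccRing n) b) + P1poly n * b
      + 2 * PhatPoly n α * derivative (AccRing n) y
      + derivative (AccRing n) (PhatPoly n α) * y = 0 := by
    rw [Derivation.leibniz, smul_eq_mul, smul_eq_mul] at hbL
    linear_combination hbL
  have hyz : y * derivative (AccRing n) yinv + yinv * derivative (AccRing n) y = 0 := by
    have h := congrArg (derivative (AccRing n)) hyinv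
    rw [Derivation.leibniz, smul_eq_mul, smul_eq_mul, Derivation.map_one_eq_zero] at h
    linear_combination h
  have hDW : derivative (AccRing n) (PhatPoly n α * (y * y)
      + Ppoly n α * (derivative (AccRing n) b * y - b * derivative (AccRing n) y)) = 0 := by
    simp only [map_add, map_sub, Derivation.leibniz, smul_eq_mul]
    linear_combination y * hb' - b * hy'
  have hW : PhatPoly n α * (y * y)
      + Ppoly n α * (derivative (AccRing n) b * y - b * derivative (AccRing n) y)
      = C (R := AccRing n) (MvPolynomial.C (kappa n α)) := by
    have h := eq_C_of_deriv_zero _ hDW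
    rw [h]
    congr 1
    simp [map_add, map_sub, map_mul, constantCoeff_PhatPoly, constantCoeff_Ppoly, hy1]
  have hP : Ppoly n α = X * PhatPoly n α := rfl
  have hs0 : constantCoeff (R := AccRing n) (b * yinv) = 0 := by rw [map_mul, hb0, zero_mul]
  have hQ0 : constantCoeff (R := AccRing n) Q = 0 := by rw [hQ, map_mul, constantCoeff_X, zero_mul]
  have hDE : derivative (AccRing n) (expS (b * yinv))
      = expS (b * yinv) * derivative (AccRing n) (b * yinv) := by
    rw [expS, substS_deriv hs0, derivative_exp']
  have hDQ : derivative (AccRing n) Q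
      = expS (b * yinv) + X * (expS (b * yinv) * derivative (AccRing n) (b * yinv)) := by
    rw [hQ, Derivation.leibniz, smul_eq_mul, smul_eq_mul, derivative_X, mul_one, hDE]
    ring
  have hDs : derivative (AccRing n) (b * yinv)
      = b * derivative (AccRing n) yinv + yinv * derivative (AccRing n) b := by
    rw [Derivation.leibniz, smul_eq_mul, smul_eq_mul]
  have hPDQy : Ppoly n α * derivative (AccRing n) Q * (y * y)
      = C (R := AccRing n) (MvPolynomial.C (kappa n α)) * Q := by
    rw [hDQ, hDs, hQ]
    linear_combination (X * expS (b * yinv)) * hW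
      + (Ppoly n α * X * expS (b * yinv) * b * y) * hyz
      + (Ppoly n α * X * expS (b * yinv)
          * (y * derivative (AccRing n) b - b * derivative (AccRing n) y)) * hyinv
      + (expS (b * yinv) * y * y) * hP
  have hPDQ : Ppoly n α * derivative (AccRing n) Q
      = C (R := AccRing n) (MvPolynomial.C (kappa n α)) * Q * (yinv * yinv) := by
    linear_combination (yinv * yinv) * hPDQy
      - (Ppoly n α * derivative (AccRing n) Q * (y * yinv + 1)) * hyinv
  have hchF : derivative (AccRing n) (substS Q (theta (eich H)))
      = substS Q (derivative (AccRing n) (theta (eich H))) * derivative (AccRing n) Q :=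
    substS_deriv hQ0 _
  have hchDF : derivative (AccRing n) (substS Q (derivative (AccRing n) (theta (eich H))))
      = substS Q (derivative (AccRing n) (derivative (AccRing n) (theta (eich H))))
          * derivative (AccRing n) Q :=
    substS_deriv hQ0 _
  have hθsub : ∀ G, substS Q (theta G) = Q * substS Q (derivative (AccRing n) G) := fun G => by
    rw [theta, substS_mul hQ0, substS_X hQ0]
  have h33 : theta (theta (theta (eich H))) = H := theta_cube_eich H hH0
  have hDθ : derivative (AccRing n) (theta (theta (eich H)))
      = derivative (AccRing n) (theta (eich H))
        + X * derivative (AccRing n) (derivative (AccRing n) (theta (eich H))) := by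
    conv_lhs => rw [show theta (theta (eich H))
      = X * derivative (AccRing n) (theta (eich H)) from rfl]
    rw [Derivation.leibniz, smul_eq_mul, smul_eq_mul, derivative_X, mul_one]
    ring
  have hSH : Q * (substS Q (derivative (AccRing n) (theta (eich H)))
        + Q * substS Q (derivative (AccRing n) (derivative (AccRing n) (theta (eich H)))))
      = Ppoly n α * X ^ (i : ℕ) * y ^ 4 := by
    conv_rhs => rw [← hH, ← h33]
    rw [hθsub, hDθ, substS_add, substS_mul hQ0, substS_X hQ0]
  have hDu : derivative (AccRing n) (y * substS Q (theta (eich H)))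
      = derivative (AccRing n) y * substS Q (theta (eich H))
        + y * (substS Q (derivative (AccRing n) (theta (eich H))) * derivative (AccRing n) Q) := by
    rw [Derivation.leibniz, smul_eq_mul, smul_eq_mul, hchF]
    ring
  have hPDu : Ppoly n α * derivative (AccRing n) (y * substS Q (theta (eich H)))
      = Ppoly n α * derivative (AccRing n) y * substS Q (theta (eich H))
        + C (R := AccRing n) (MvPolynomial.C (kappa n α))
            * (yinv * (Q * substS Q (derivative (AccRing n) (theta (eich H))))) := by
    rw [hDu]
    linear_combination (y * substS Q (derivative (AccRing n) (theta (eich H)))) * hPDQ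
      + (C (R := AccRing n) (MvPolynomial.C (kappa n α)) * Q * yinv
          * substS Q (derivative (AccRing n) (theta (eich H)))) * hyinv
  have hDc : derivative (AccRing n) (C (R := AccRing n) (MvPolynomial.C (kappa n α))) = 0 :=
    derivative_C
  have hD2 : derivative (AccRing n)
        (Ppoly n α * derivative (AccRing n) (y * substS Q (theta (eich H))))
      = derivative (AccRing n) (Ppoly n α) * derivative (AccRing n) y
            * substS Q (theta (eich H))
        + Ppoly n α * derivative (AccRing n) (derivative (AccRing n) y)
            * substS Q (theta (eich H))
        + Ppoly n α * derivative (AccRing n) y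
            * (substS Q (derivative (AccRing n) (theta (eich H))) * derivative (AccRing n) Q)
        + C (R := AccRing n) (MvPolynomial.C (kappa n α)) *
            (derivative (AccRing n) yinv
                * (Q * substS Q (derivative (AccRing n) (theta (eich H))))
             + yinv * (derivative (AccRing n) Q
                    * substS Q (derivative (AccRing n) (theta (eich H)))
                 + Q * (substS Q (derivative (AccRing n) (derivative (AccRing n) (theta (eich H))))
                    * derivative (AccRing n) Q))) := by
    rw [hPDu]
    simp only [map_add, Derivation.leibniz, smul_eq_mul, hDc, zero_mul, mul_zero, add_zero,
      zero_add, hchF, hchDF]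
    ring
  have key : Ppoly n α * (y * y) * Lop n α (y * substS Q (theta (eich H)))
      = Ppoly n α * (y * y)
        * (C (R := AccRing n) (MvPolynomial.C (kappa n α)) ^ 2 * (X ^ (i : ℕ) * y)) := by
    rw [Lop, hD2]
    linear_combination
      (Ppoly n α * (y * y) * substS Q (theta (eich H))) * hy'
      + (C (R := AccRing n) (MvPolynomial.C (kappa n α)) * Ppoly n α * Q
          * substS Q (derivative (AccRing n) (theta (eich H))) * y) * hyz
      + (C (R := AccRing n) (MvPolynomial.C (kappa n α)) * Ppoly n α * Q
          * substS Q (derivative (AccRing n) (theta (eich H))) * y * yinv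
            * derivative (AccRing n) y
         + C (R := AccRing n) (MvPolynomial.C (kappa n α)) ^ 2 * Ppoly n α * X ^ (i : ℕ) * y ^ 3
            * (yinv ^ 2 * y ^ 2 + yinv * y + 1)) * hyinv
      + ((y * y) * (Ppoly n α * derivative (AccRing n) y
            * substS Q (derivative (AccRing n) (theta (eich H)))
          + C (R := AccRing n) (MvPolynomial.C (kappa n α)) * yinv
            * substS Q (derivative (AccRing n) (theta (eich H)))
          + C (R := AccRing n) (MvPolynomial.C (kappa n α)) * yinv * Q
            * substS Q (derivative (AccRing n) (derivative (AccRing n) (theta (eich H)))))) * hPDQ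
      + (C (R := AccRing n) (MvPolynomial.C (kappa n α)) ^ 2 * yinv ^ 3 * (y * y)) * hSH
  have hyne : y ≠ 0 := fun h => by
    rw [h, map_zero] at hy1
    exact one_ne_zero hy1.symm
  have hPne : Ppoly n α ≠ 0 := fun h => by
    have h1 := coeff_one_Ppoly (n := n) α
    rw [h, map_zero] at h1
    exact hκ (by simpa using congrArg (MvPolynomial.coeff 0) h1.symm)
  have hPy : Ppoly n α * (y * y) ≠ 0 := mul_ne_zero hPne (mul_ne_zero hyne hyne)
  have hu : Lop n α (y * substS Q (theta (eich H)))
      = C (R := AccRing n) (MvPolynomial.C (kappa n α)) ^ 2 * (X ^ (i : ℕ) * y) :=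
    mul_left_cancel₀ hPy key
  have hpd1 : pd i (Lop n α y) = 0 := by
    rw [hy]
    ext m : 1
    simp [coeff_pd]
  have hpd2 : pd i (Lop n α y)
      = derivative (AccRing n) (Ppoly n α * derivative (AccRing n) (pd i y))
        + P1poly n * pd i y - X ^ (i : ℕ) * y := by
    rw [Lop]
    simp only [pd_add, pd_mul, pd_deriv, pd_Ppoly, pd_P1poly]
    ring
  have hpdL : Lop n α (pd i y) = X ^ (i : ℕ) * y := by
    rw [Lop]
    linear_combination hpd2.symm.trans hpd1
  have hDc2 : derivative (AccRing n) (C (R := AccRing n) (MvPolynomial.C (kappa n α)) ^ 2) = 0 := by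
    rw [sq, Derivation.leibniz, hDc]
    simp
  have hdiffL : Lop n α (C (R := AccRing n) (MvPolynomial.C (kappa n α)) ^ 2 * pd i y
        - y * substS Q (theta (eich H)))
      = C (R := AccRing n) (MvPolynomial.C (kappa n α)) ^ 2 * Lop n α (pd i y)
        - Lop n α (y * substS Q (theta (eich H))) := by
    simp only [Lop, map_sub, Derivation.leibniz, smul_eq_mul, hDc2, hDc, mul_zero, zero_mul,
      add_zero, zero_add, mul_sub, sub_zero, map_add]
    ring
  have hdiff0 : Lop n α (C (R := AccRing n) (MvPolynomial.C (kappa n α)) ^ 2 * pd i y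
      - y * substS Q (theta (eich H))) = 0 := by
    rw [hdiffL, hpdL, hu]
    ring
  have h00 : constantCoeff (R := AccRing n) (C (R := AccRing n) (MvPolynomial.C (kappa n α)) ^ 2 * pd i y
      - y * substS Q (theta (eich H))) = 0 := by
    have h1 : constantCoeff (R := AccRing n) (pd i y) = 0 := by
      rw [← coeff_zero_eq_constantCoeff_apply, coeff_pd, coeff_zero_eq_constantCoeff_apply, hy1]
      exact MvPolynomial.pderiv_one
    have h2 : constantCoeff (R := AccRing n) (substS Q (theta (eich H))) = 0 := by
      rw [constantCoeff_substS, constantCoeff_theta]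
    simp [map_sub, map_mul, map_pow, h1, h2]
  have hfinal := L_unique α hκ _ hdiff0 h00
  linear_combination hfinal
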